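/- Let G be a Cameron–Walker graph in standard form and define, for a subset V ⊆ {v_1,...,v_m}, f(V) = Σ_{v_i ∈ V} s_i + m − |V| + Σ_{j : N_bip(w_j) ⊄ V} t_j + #{j : N_bip(w_j) ⊆ V}. Then i(G) = min over all V ⊆ {v_1,...,v_m} of f(V), where i(G) is the minimum cardinality of an independent set A of G with A ∪ N_G(A) = V(G). -/

import Mathlib

/-- A finite set of vertices is independent in `G` if no two of its members are adjacent. -/
def SimpleGraph.IsIndepFinset {V : Type*} (G : SimpleGraph V) (A : Finset V) : Prop :=
  ∀ u ∈ A, ∀ v ∈ A, ¬ G.Adj u v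

/-- `A` is an independent dominating set of `G`: `A` is independent and
`A ∪ N_G(A) = V(G)`, i.e. every vertex is in `A` or adjacent to a member of `A`. -/
def SimpleGraph.IsIndepDomFinset {V : Type*} (G : SimpleGraph V) (A : Finset V) : Prop :=
  G.IsIndepFinset A ∧ ∀ v : V, v ∈ A ∨ ∃ u ∈ A, G.Adj u v

/-- The vertex set of a Cameron–Walker graph in standard form:
the `vᵢ` (`i : Fin m`), the `w_j` (`j : Fin p`), the `sᵢ` leaves attached to `vᵢ`,
and the two extra vertices of each of the `t_j` pendant triangles attached to `w_j`. -/
abbrev CWVert (m p : ℕ) (s : Fin m → ℕ) (t : Fin p → ℕ) : Type :=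
  (Fin m) ⊕ (Fin p) ⊕ (Σ i : Fin m, Fin (s i)) ⊕ (Σ j : Fin p, Fin (t j) × Fin 2)

/-- The Cameron–Walker graph in standard form: a bipartite graph between the `vᵢ`
and the `w_j` with edge relation `E`, together with `sᵢ` pendant leaves at each `vᵢ`
and `t_j` pendant triangles at each `w_j`. -/
def CWGraph (m p : ℕ) (E : Fin m → Fin p → Prop) (s : Fin m → ℕ) (t : Fin p → ℕ) :
    SimpleGraph (CWVert m p s t) :=
  SimpleGraph.fromRel (fun u v =>
    match u, v with
    | Sum.inl i, Sum.inr (Sum.inl j) => E i j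
    | Sum.inl i, Sum.inr (Sum.inr (Sum.inl ⟨i', _⟩)) => i = i'
    | Sum.inr (Sum.inl j), Sum.inr (Sum.inr (Sum.inr ⟨j', _⟩)) => j = j'
    | Sum.inr (Sum.inr (Sum.inr ⟨j, l, _⟩)), Sum.inr (Sum.inr (Sum.inr ⟨j', l', _⟩)) =>
        j = j' ∧ HEq l l'
    | _, _ => False)

/-- The bipartite part of the Cameron–Walker graph, as a graph on `{v₁,…,vₘ} ∪ {w₁,…,w_p}`. -/
def CWBip (m p : ℕ) (E : Fin m → Fin p → Prop) : SimpleGraph ((Fin m) ⊕ (Fin p)) :=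
  SimpleGraph.fromRel (fun u v =>
    match u, v with
    | Sum.inl i, Sum.inr j => E i j
    | _, _ => False)

open Classical in
theorem cw_upper (m p : ℕ) (E : Fin m → Fin p → Prop) (s : Fin m → ℕ) (t : Fin p → ℕ)
    (hs : ∀ i, 1 ≤ s i) (V : Finset (Fin m)) :
    ∃ A : Finset (CWVert m p s t), (CWGraph m p E s t).IsIndepDomFinset A ∧
      A.card = (∑ i ∈ V, s i) + (m - V.card)
          + (∑ j ∈ Finset.univ.filter (fun j : Fin p => ¬ ∀ i, E i j → i ∈ V), t j)
          + (Finset.univ.filter (fun j : Fin p => ∀ i, E i j → i ∈ V)).card := by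
  refine ⟨Finset.univ.filter (fun x : CWVert m p s t => match x with
    | Sum.inl i => i ∉ V
    | Sum.inr (Sum.inl j) => ∀ i, E i j → i ∈ V
    | Sum.inr (Sum.inr (Sum.inl ⟨i, _⟩)) => i ∈ V
    | Sum.inr (Sum.inr (Sum.inr ⟨j, _, b⟩)) => (¬ ∀ i, E i j → i ∈ V) ∧ b = 0), ⟨?_, ?_⟩, ?_⟩
  · -- independence
    intro u hu v hv hadj
    simp only [Finset.mem_filter, Finset.mem_univ, true_and] at hu hv
    rcases u with i | j | ⟨i, k⟩ | ⟨j, l, b⟩ <;>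
      rcases v with i' | j' | ⟨i', k'⟩ | ⟨j', l', b'⟩ <;>
      simp only [CWGraph, SimpleGraph.fromRel_adj, ne_eq, false_or, or_false, or_self,
        and_false, false_and, not_false_eq_true, and_true, true_and] at hadj
    · exact hu (hv i hadj.2)
    · obtain ⟨-, h⟩ := hadj; subst h; exact hu hv
    · exact hv (hu i' hadj.2)
    · obtain ⟨-, h⟩ := hadj; subst h; exact hv.1 hu
    · obtain ⟨-, h⟩ := hadj; subst h; exact hv hu
    · obtain ⟨-, h⟩ := hadj; subst h; exact hu.1 hv
    · obtain ⟨hne, h⟩ := hadj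
      obtain ⟨-, hb⟩ := hu
      obtain ⟨-, hb'⟩ := hv
      subst hb; subst hb'
      rcases h with ⟨hj, hl⟩ | ⟨hj, hl⟩
      · subst hj; cases eq_of_heq hl; exact hne rfl
      · subst hj; cases eq_of_heq hl; exact hne rfl
  · -- domination
    intro x
    simp only [Finset.mem_filter, Finset.mem_univ, true_and]
    rcases x with i | j | ⟨i, k⟩ | ⟨j, l, b⟩
    · by_cases hi : i ∈ V
      · exact Or.inr ⟨Sum.inr (Sum.inr (Sum.inl ⟨i, ⟨0, hs i⟩⟩)), by simp [hi], by simp [CWGraph]⟩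
      · exact Or.inl hi
    · by_cases hj : ∀ i, E i j → i ∈ V
      · exact Or.inl hj
      · push_neg at hj
        obtain ⟨i, hij, hiV⟩ := hj
        exact Or.inr ⟨Sum.inl i, by simp [hiV], by simp [CWGraph, hij]⟩
    · by_cases hi : i ∈ V
      · exact Or.inl hi
      · exact Or.inr ⟨Sum.inl i, by simp [hi], by simp [CWGraph]⟩
    · by_cases hj : ∀ i, E i j → i ∈ V
      · exact Or.inr ⟨Sum.inr (Sum.inl j), by simp only [Finset.mem_filter, Finset.mem_univ, true_and]; exact hj, by simp [CWGraph]⟩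
      · by_cases hb : b = 0
        · exact Or.inl ⟨hj, hb⟩
        · exact Or.inr ⟨Sum.inr (Sum.inr (Sum.inr ⟨j, l, 0⟩)), by simp [hj], by
            simp [CWGraph]; exact fun h => hb h.symm⟩
  · -- cardinality
    have e1 : ∑ i : Fin m, (if i ∉ V then 1 else 0) = m - V.card := by
      rw [← Finset.card_filter]
      have : Finset.univ.filter (fun i : Fin m => i ∉ V) = Vᶜ := by ext; simp
      rw [this, Finset.card_compl, Fintype.card_fin]
    have e2 : ∑ j : Fin p, (if (∀ i, E i j → i ∈ V) then 1 else 0)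
        = (Finset.univ.filter (fun j : Fin p => ∀ i, E i j → i ∈ V)).card := by
      rw [← Finset.card_filter]
    have e3 : ∑ x : (Σ i : Fin m, Fin (s i)),
        (if x.1 ∈ V then 1 else 0) = ∑ i ∈ V, s i := by
      rw [← Finset.univ_sigma_univ, Finset.sum_sigma]
      have h1 : ∀ i : Fin m, ∑ _k : Fin (s i), (if i ∈ V then 1 else 0)
          = if i ∈ V then s i else 0 := by
        intro i; by_cases hi : i ∈ V <;> simp [hi]
      rw [Finset.sum_congr rfl (fun i _ => h1 i), Finset.sum_ite_mem, Finset.univ_inter]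
    have e4 : ∑ x : (Σ j : Fin p, Fin (t j) × Fin 2),
        (if (¬ (∀ i, E i x.1 → i ∈ V)) ∧ x.2.2 = 0 then 1 else 0)
        = ∑ j ∈ Finset.univ.filter (fun j : Fin p => ¬ ∀ i, E i j → i ∈ V), t j := by
      rw [← Finset.univ_sigma_univ, Finset.sum_sigma]
      have h1 : ∀ j : Fin p, ∑ y : Fin (t j) × Fin 2,
          (if (¬ (∀ i, E i j → i ∈ V)) ∧ y.2 = 0 then 1 else 0)
          = if (¬ ∀ i, E i j → i ∈ V) then t j else 0 := by
        intro j
        by_cases hj : ∀ i, E i j → i ∈ V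
        · rw [if_neg (not_not_intro hj)]
          exact Finset.sum_eq_zero (fun y _ => if_neg (fun h => h.1 hj))
        · rw [if_pos hj]
          have h2 : ∀ y : Fin (t j) × Fin 2,
              (if (¬ (∀ i, E i j → i ∈ V)) ∧ y.2 = 0 then 1 else 0)
              = (if y.2 = 0 then (1 : ℕ) else 0) := by
            intro y; by_cases hy : y.2 = 0 <;> simp [hy, hj]
          rw [Finset.sum_congr rfl (fun y _ => h2 y), Fintype.sum_prod_type]
          simp [Finset.sum_ite_eq']
      rw [Finset.sum_congr rfl (fun j _ => h1 j), Finset.sum_filter]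
    calc (Finset.univ.filter _).card
        = (∑ i : Fin m, (if i ∉ V then 1 else 0))
          + ((∑ j : Fin p, (if (∀ i, E i j → i ∈ V) then 1 else 0))
          + ((∑ x : (Σ i : Fin m, Fin (s i)), (if x.1 ∈ V then 1 else 0))
          + (∑ x : (Σ j : Fin p, Fin (t j) × Fin 2),
              (if (¬ (∀ i, E i x.1 → i ∈ V)) ∧ x.2.2 = 0 then 1 else 0)))) := by
          rw [Finset.card_filter, Fintype.sum_sum_type, Fintype.sum_sum_type,
            Fintype.sum_sum_type]
          refine congrArg₂ _ (Finset.sum_congr rfl fun i _ => ?_)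
            (congrArg₂ _ (Finset.sum_congr rfl fun j _ => ?_)
            (congrArg₂ _ (Finset.sum_congr rfl fun x _ => ?_)
            (Finset.sum_congr rfl fun x _ => ?_)))
          · by_cases h : i ∈ V <;> simp [h]
          · by_cases h : ∀ i, E i j → i ∈ V <;> simp [h]
          · rcases x with ⟨i, k⟩; by_cases h : i ∈ V <;> simp [h]
          · rcases x with ⟨j, l, b⟩
            by_cases h1 : ∀ i, E i j → i ∈ V <;> by_cases h2 : b = 0 <;> simp [h1, h2]
      _ = _ := by rw [e1, e2, e3, e4]; omega


open Classical in
theorem cw_lower (m p : ℕ) (E : Fin m → Fin p → Prop) (s : Fin m → ℕ) (t : Fin p → ℕ)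
    (A : Finset (CWVert m p s t)) (hA : (CWGraph m p E s t).IsIndepDomFinset A) :
    ∃ V : Finset (Fin m),
      (∑ i ∈ V, s i) + (m - V.card)
          + (∑ j ∈ Finset.univ.filter (fun j : Fin p => ¬ ∀ i, E i j → i ∈ V), t j)
          + (Finset.univ.filter (fun j : Fin p => ∀ i, E i j → i ∈ V)).card ≤ A.card := by
  obtain ⟨hind, hdom⟩ := hA
  refine ⟨Finset.univ.filter (fun i : Fin m => Sum.inl i ∉ A), ?_⟩
  set V : Finset (Fin m) := Finset.univ.filter (fun i : Fin m => Sum.inl i ∉ A) with hV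
  have hVmem : ∀ i : Fin m, i ∈ V ↔ Sum.inl i ∉ A := by
    intro i; simp [hV]
  -- classification map
  set φ : CWVert m p s t → (Fin m ⊕ Fin m ⊕ Fin p) := fun x => match x with
    | Sum.inl i => Sum.inl i
    | Sum.inr (Sum.inl j) => Sum.inr (Sum.inr j)
    | Sum.inr (Sum.inr (Sum.inl ⟨i, _⟩)) => Sum.inr (Sum.inl i)
    | Sum.inr (Sum.inr (Sum.inr ⟨j, _⟩)) => Sum.inr (Sum.inr j) with hφ
  have hcard : A.card = ∑ c : (Fin m ⊕ Fin m ⊕ Fin p), (A.filter (fun x => φ x = c)).card :=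
    Finset.card_eq_sum_card_fiberwise (fun x _ => Finset.mem_univ _)
  rw [Fintype.sum_sum_type, Fintype.sum_sum_type] at hcard
  -- every leaf of a vertex in V is in A
  have hleaf : ∀ i : Fin m, i ∈ V → ∀ k : Fin (s i),
      (Sum.inr (Sum.inr (Sum.inl ⟨i, k⟩)) : CWVert m p s t) ∈ A := by
    intro i hi k
    rcases hdom (Sum.inr (Sum.inr (Sum.inl ⟨i, k⟩))) with h | ⟨u, hu, hadj⟩
    · exact h
    · exfalso
      rcases u with i' | j' | ⟨i', k'⟩ | ⟨j', l', b'⟩ <;>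
        simp only [CWGraph, SimpleGraph.fromRel_adj, ne_eq, false_or, or_false, or_self,
          and_false, false_and, not_false_eq_true, and_true, true_and] at hadj
      obtain ⟨-, h⟩ := hadj
      exact (hVmem i).mp hi (h ▸ hu)
  -- bound on the v-fibers
  have h1 : ∀ i : Fin m, (if i ∈ V then 0 else 1)
      ≤ (A.filter (fun x => φ x = Sum.inl i)).card := by
    intro i
    by_cases hi : i ∈ V
    · simp [hi]
    · rw [if_neg hi]
      refine Finset.card_pos.mpr ⟨Sum.inl i, ?_⟩
      rw [Finset.mem_filter]
      refine ⟨?_, rfl⟩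
      by_contra h
      exact hi ((hVmem i).mpr h)
  -- bound on the leaf-fibers
  have h2 : ∀ i : Fin m, (if i ∈ V then s i else 0)
      ≤ (A.filter (fun x => φ x = Sum.inr (Sum.inl i))).card := by
    intro i
    by_cases hi : i ∈ V
    · rw [if_pos hi]
      have := Finset.card_le_card_of_injOn
        (f := fun k : Fin (s i) => (Sum.inr (Sum.inr (Sum.inl ⟨i, k⟩)) : CWVert m p s t))
        (s := Finset.univ) (t := A.filter (fun x => φ x = Sum.inr (Sum.inl i)))
        (fun k _ => by rw [Finset.mem_coe, Finset.mem_filter]; exact ⟨hleaf i hi k, rfl⟩)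
        (fun k _ k' _ h => by simpa using h)
      simpa using this
    · simp [hi]
  -- bound on the w/triangle fibers
  have h3 : ∀ j : Fin p, (if (∀ i, E i j → i ∈ V) then 1 else t j)
      ≤ (A.filter (fun x => φ x = Sum.inr (Sum.inr j))).card := by
    intro j
    by_cases hj : ∀ i, E i j → i ∈ V
    · rw [if_pos hj]
      refine Finset.card_pos.mpr ?_
      rcases hdom (Sum.inr (Sum.inl j)) with hw | ⟨u, hu, hadj⟩
      · exact ⟨Sum.inr (Sum.inl j), by rw [Finset.mem_filter]; exact ⟨hw, rfl⟩⟩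
      · rcases u with i' | j' | ⟨i', k'⟩ | ⟨j', l', b'⟩ <;>
          simp only [CWGraph, SimpleGraph.fromRel_adj, ne_eq, false_or, or_false, or_self,
            and_false, false_and, not_false_eq_true, and_true, true_and] at hadj
        · exfalso
          have hiV : i' ∈ V := hj i' hadj.2
          exact (hVmem i').mp hiV hu
        · obtain ⟨-, h⟩ := hadj
          exact ⟨Sum.inr (Sum.inr (Sum.inr ⟨j', l', b'⟩)), by
            rw [Finset.mem_filter]
            exact ⟨hu, by rw [show φ (Sum.inr (Sum.inr (Sum.inr ⟨j', l', b'⟩)))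
              = Sum.inr (Sum.inr j') from rfl, h]⟩⟩
    · rw [if_neg hj]
      push_neg at hj
      obtain ⟨i, hEij, hiV⟩ := hj
      have hiA : Sum.inl i ∈ A := by
        by_contra h
        exact hiV ((hVmem i).mpr h)
      have hwA : (Sum.inr (Sum.inl j) : CWVert m p s t) ∉ A := by
        intro hw
        exact hind _ hiA _ hw (by simp [CWGraph, hEij])
      have hex : ∀ l : Fin (t j), ∃ b : Fin 2,
          (Sum.inr (Sum.inr (Sum.inr ⟨j, l, b⟩)) : CWVert m p s t) ∈ A := by
        intro l
        rcases hdom (Sum.inr (Sum.inr (Sum.inr ⟨j, l, 0⟩))) with h | ⟨u, hu, hadj⟩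
        · exact ⟨0, h⟩
        · rcases u with i' | j' | ⟨i', k'⟩ | ⟨j', l', b'⟩ <;>
            simp only [CWGraph, SimpleGraph.fromRel_adj, ne_eq, false_or, or_false, or_self,
              and_false, false_and, not_false_eq_true, and_true, true_and] at hadj
          · obtain ⟨-, h⟩ := hadj
            exact absurd (h ▸ hu) hwA
          · obtain ⟨hne, h⟩ := hadj
            rcases h with ⟨hjj, hll⟩ | ⟨hjj, hll⟩
            · subst hjj; cases eq_of_heq hll; exact ⟨b', hu⟩
            · subst hjj; cases eq_of_heq hll; exact ⟨b', hu⟩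
      choose g hg using hex
      have := Finset.card_le_card_of_injOn
        (f := fun l : Fin (t j) =>
          (Sum.inr (Sum.inr (Sum.inr ⟨j, l, g l⟩)) : CWVert m p s t))
        (s := Finset.univ) (t := A.filter (fun x => φ x = Sum.inr (Sum.inr j)))
        (fun l _ => by rw [Finset.mem_coe, Finset.mem_filter]; exact ⟨hg l, rfl⟩)
        (fun l _ l' _ h => by exact (by simpa using h : l = l' ∧ _).1)
      simpa using this
  -- assemble
  have b1 : ∑ i : Fin m, (if i ∈ V then 0 else 1)
      ≤ ∑ i : Fin m, (A.filter (fun x => φ x = Sum.inl i)).card :=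
    Finset.sum_le_sum (fun i _ => h1 i)
  have b2 : ∑ i : Fin m, (if i ∈ V then s i else 0)
      ≤ ∑ i : Fin m, (A.filter (fun x => φ x = Sum.inr (Sum.inl i))).card :=
    Finset.sum_le_sum (fun i _ => h2 i)
  have b3 : ∑ j : Fin p, (if (∀ i, E i j → i ∈ V) then 1 else t j)
      ≤ ∑ j : Fin p, (A.filter (fun x => φ x = Sum.inr (Sum.inr j))).card :=
    Finset.sum_le_sum (fun j _ => h3 j)
  have v1 : ∑ i : Fin m, (if i ∈ V then 0 else 1) = m - V.card := by
    have : ∀ i : Fin m, (if i ∈ V then 0 else 1) = (if i ∉ V then 1 else 0) := by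
      intro i; by_cases hi : i ∈ V <;> simp [hi]
    rw [Finset.sum_congr rfl (fun i _ => this i), ← Finset.card_filter]
    have : Finset.univ.filter (fun i : Fin m => i ∉ V) = Vᶜ := by ext; simp
    rw [this, Finset.card_compl, Fintype.card_fin]
  have v2 : ∑ i : Fin m, (if i ∈ V then s i else 0) = ∑ i ∈ V, s i := by
    rw [Finset.sum_ite_mem, Finset.univ_inter]
  have v3 : ∑ j : Fin p, (if (∀ i, E i j → i ∈ V) then 1 else t j)
      = (Finset.univ.filter (fun j : Fin p => ∀ i, E i j → i ∈ V)).card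
        + ∑ j ∈ Finset.univ.filter (fun j : Fin p => ¬ ∀ i, E i j → i ∈ V), t j := by
    rw [Finset.sum_ite, Finset.sum_const, smul_eq_mul, mul_one]
  omega


open Classical in
/-- `i(G)`, the least size of an independent dominating set of a
Cameron–Walker graph `G` in standard form, equals the minimum over all
`V ⊆ {v₁,…,vₘ}` of
`f(V) = Σ_{vᵢ∈V} sᵢ + m − |V| + Σ_{j : N_bip(w_j) ⊄ V} t_j + #{j : N_bip(w_j) ⊆ V}`. -/
theorem stmt_13 (m p : ℕ) (hm : 1 ≤ m) (hp : 1 ≤ p) (E : Fin m → Fin p → Prop)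
    (s : Fin m → ℕ) (t : Fin p → ℕ) (hs : ∀ i, 1 ≤ s i)
    (hconn : (CWBip m p E).Connected) :
    sInf {k : ℕ | ∃ A : Finset (CWVert m p s t),
        (CWGraph m p E s t).IsIndepDomFinset A ∧ A.card = k}
      = sInf (Set.range (fun V : Finset (Fin m) =>
          (∑ i ∈ V, s i) + (m - V.card)
          + (∑ j ∈ Finset.univ.filter (fun j : Fin p => ¬ ∀ i, E i j → i ∈ V), t j)
          + (Finset.univ.filter (fun j : Fin p => ∀ i, E i j → i ∈ V)).card)) := by
  apply le_antisymm
  · have hne : (Set.range (fun V : Finset (Fin m) =>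
          (∑ i ∈ V, s i) + (m - V.card)
          + (∑ j ∈ Finset.univ.filter (fun j : Fin p => ¬ ∀ i, E i j → i ∈ V), t j)
          + (Finset.univ.filter (fun j : Fin p => ∀ i, E i j → i ∈ V)).card)).Nonempty :=
      ⟨_, ⟨(∅ : Finset (Fin m)), rfl⟩⟩
    obtain ⟨V, hV⟩ := Nat.sInf_mem hne
    obtain ⟨A, hA, hcard⟩ := cw_upper m p E s t hs V
    rw [← hV]
    exact Nat.sInf_le ⟨A, hA, hcard⟩
  · have hne : {k : ℕ | ∃ A : Finset (CWVert m p s t),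
        (CWGraph m p E s t).IsIndepDomFinset A ∧ A.card = k}.Nonempty := by
      obtain ⟨A, hA, hc⟩ := cw_upper m p E s t hs ∅
      exact ⟨A.card, A, hA, rfl⟩
    obtain ⟨A, hA, hcard⟩ := Nat.sInf_mem hne
    obtain ⟨V, hle⟩ := cw_lower m p E s t A hA
    calc sInf (Set.range _) ≤ _ := Nat.sInf_le ⟨V, rfl⟩
      _ ≤ A.card := hle
      _ = _ := hcard
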